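/- Suppose a(s) and b(s) are monic degree-n real polynomials, and c(s) is a real polynomial such that c(s)/a(s) and c(s)/b(s) are both strictly positive real. Then for every λ ∈ [0,1], the polynomial λ b(s) + (1-λ) a(s) is Hurwitz stable (all roots have negative real part). -/

import Mathlib

open Polynomial Complex

noncomputable def evalI (p : Polynomial ℝ) (ω : ℝ) : ℂ :=
  Polynomial.aeval ((ω : ℂ) * Complex.I) p

/-- All complex roots have strictly negative real part. -/
def HurwitzStable (p : Polynomial ℝ) : Prop :=
  ∀ z : ℂ, Polynomial.aeval z p = 0 → z.re < 0

/-- `p/q` is strictly positive real. -/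
def SPR (p q : Polynomial ℝ) : Prop :=
  p.degree = q.degree ∧ HurwitzStable q ∧
    ∀ ω : ℝ, 0 < (evalI p ω / evalI q ω).re

open Filter Set Metric Bornology

private lemma eval_norm_le (p : ℂ[X]) {d : ℕ} (hd : p.natDegree ≤ d) {z : ℂ} (hz : 1 ≤ ‖z‖) :
    ‖p.eval z‖ ≤ (∑ i ∈ Finset.range (p.natDegree + 1), ‖p.coeff i‖) * ‖z‖ ^ d := by
  rw [eval_eq_sum_range, Finset.sum_mul]
  refine (norm_sum_le _ _).trans (Finset.sum_le_sum fun i hi => ?_)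
  rw [norm_mul, norm_pow]
  have h2 : ‖z‖ ^ i ≤ ‖z‖ ^ d := pow_le_pow_right₀ hz (le_trans (Nat.lt_succ_iff.mp (Finset.mem_range.mp hi)) hd)
  exact mul_le_mul_of_nonneg_left h2 (norm_nonneg _)

private lemma small_eval (a p : ℂ[X]) (hp : p.degree < a.degree) :
    ∃ M : ℝ, 0 ≤ M ∧ ∀ z : ℂ, 1 ≤ ‖z‖ → ‖p.eval z‖ * ‖z‖ ≤ M * ‖z‖ ^ a.natDegree := by
  rcases eq_or_ne p 0 with rfl | hp0
  · exact ⟨0, le_refl 0, fun z hz => by simp⟩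
  · set q := p * X with hq
    have hqd : q.natDegree ≤ a.natDegree := by
      rw [hq, natDegree_mul_X hp0]
      exact Nat.succ_le_of_lt (natDegree_lt_natDegree hp0 hp)
    refine ⟨∑ i ∈ Finset.range (q.natDegree + 1), ‖q.coeff i‖,
      Finset.sum_nonneg fun i _ => norm_nonneg _, fun z hz => ?_⟩
    have := eval_norm_le q hqd hz
    rwa [hq, eval_mul, eval_X, norm_mul] at this

private lemma ratio_estimate (c a : ℂ[X]) (ha : a.Monic) (hdeg : c.degree = a.degree)
    {ε : ℝ} (hε : 0 < ε) : ∃ R : ℝ, 1 ≤ R ∧ ∀ z : ℂ, R ≤ ‖z‖ →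
      a.eval z ≠ 0 ∧ ‖c.eval z / a.eval z - c.leadingCoeff‖ < ε := by
  have ha0 : a ≠ 0 := ha.ne_zero
  have hc0 : c ≠ 0 := by
    intro h
    rw [h, degree_zero] at hdeg
    exact ha0 (degree_eq_bot.mp hdeg.symm)
  set n := a.natDegree with hn
  set lc := c.leadingCoeff with hlc
  have hlc0 : lc ≠ 0 := leadingCoeff_ne_zero.mpr hc0
  set r := c - C lc * a with hr
  have hrd : r.degree < a.degree := by
    have h1 : degree (C lc * a) = degree c := by
      rw [degree_C_mul hlc0, hdeg]
    have h2 : c.leadingCoeff = (C lc * a).leadingCoeff := by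
      rw [leadingCoeff_mul, leadingCoeff_C, ha.leadingCoeff, mul_one]
    have := degree_sub_lt h1.symm hc0 h2
    rwa [hdeg] at this
  set s := a - X ^ n with hs
  have hsd : s.degree < a.degree := by
    have h1 : degree a = degree (X ^ n : ℂ[X]) := by
      rw [degree_X_pow, degree_eq_natDegree ha0]
    exact degree_sub_lt h1 ha0 (by rw [ha.leadingCoeff, leadingCoeff_X_pow])
  obtain ⟨Mr, hMr0, hMr⟩ := small_eval a r hrd
  obtain ⟨Ms, hMs0, hMs⟩ := small_eval a s hsd
  refine ⟨max (max 1 (2 * Ms + 1)) ((2 * Mr + 1) / ε), le_trans (le_max_left 1 _) (le_max_left _ _), fun z hz => ?_⟩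
  have hz1 : 1 ≤ ‖z‖ := le_trans (le_trans (le_max_left 1 _) (le_max_left _ _)) hz
  have hz0 : 0 < ‖z‖ := lt_of_lt_of_le one_pos hz1
  have hzn : (0:ℝ) < ‖z‖ ^ n := pow_pos hz0 n
  have hzMs : 2 * Ms + 1 ≤ ‖z‖ := le_trans (le_trans (le_max_right 1 _) (le_max_left _ _)) hz
  have hzMr : (2 * Mr + 1) / ε ≤ ‖z‖ := le_trans (le_max_right _ _) hz
  -- lower bound on ‖a.eval z‖
  have hsev : ‖s.eval z‖ * ‖z‖ ≤ Ms * ‖z‖ ^ n := hMs z hz1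
  have hsle : ‖s.eval z‖ ≤ ‖z‖ ^ n / 2 := by
    rw [← mul_le_mul_iff_left₀ hz0]
    have h1 : (2 * Ms + 1) * ‖z‖ ^ n ≤ ‖z‖ * ‖z‖ ^ n :=
      mul_le_mul_of_nonneg_right hzMs (le_of_lt hzn)
    nlinarith [hsev, hzn]
  have haev : a.eval z = z ^ n + s.eval z := by
    rw [hs, eval_sub, eval_pow, eval_X]; ring
  have halow : ‖z‖ ^ n / 2 ≤ ‖a.eval z‖ := by
    have h1 : ‖(z:ℂ) ^ n‖ = ‖z‖ ^ n := norm_pow z n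
    calc ‖z‖ ^ n / 2 = ‖z‖ ^ n - ‖z‖ ^ n / 2 := by ring
    _ ≤ ‖(z:ℂ)^n‖ - ‖s.eval z‖ := by rw [h1]; linarith
    _ ≤ ‖(z:ℂ)^n + s.eval z‖ := by
        have h3 : ‖(z:ℂ)^n‖ = ‖((z:ℂ)^n + s.eval z) - s.eval z‖ := by congr 1; ring
        have h4 := norm_sub_le ((z:ℂ)^n + s.eval z) (s.eval z)
        linarith [h3 ▸ h4]
    _ = ‖a.eval z‖ := by rw [haev]
  have hane : a.eval z ≠ 0 := by
    intro h; rw [h, norm_zero] at halow; linarith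
  refine ⟨hane, ?_⟩
  have hrval : r.eval z = c.eval z - lc * a.eval z := by simp [hr]
  have hkey : c.eval z / a.eval z - lc = r.eval z / a.eval z := by
    rw [hrval]; field_simp
  rw [hkey, norm_div]
  rw [div_lt_iff₀ (lt_of_lt_of_le (by linarith) halow)]
  have hrev : ‖r.eval z‖ * ‖z‖ ≤ Mr * ‖z‖ ^ n := hMr z hz1
  have hεz : 2 * Mr + 1 ≤ ε * ‖z‖ := by
    rw [div_le_iff₀ hε] at hzMr; linarith [hzMr]
  have h₁ : (2 * Mr + 1) * ‖z‖ ^ n ≤ ε * ‖z‖ * ‖z‖ ^ n :=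
    mul_le_mul_of_nonneg_right hεz (le_of_lt hzn)
  have h₂ : ε * ‖z‖ * (‖z‖ ^ n / 2) ≤ ε * ‖z‖ * ‖a.eval z‖ :=
    mul_le_mul_of_nonneg_left halow (by positivity)
  rw [← mul_lt_mul_iff_left₀ hz0]
  calc ‖r.eval z‖ * ‖z‖ ≤ Mr * ‖z‖ ^ n := hrev
    _ < ε * ‖a.eval z‖ * ‖z‖ := by nlinarith

private lemma aeval_eq_eval_map (p : Polynomial ℝ) (z : ℂ) :
    aeval z p = (p.map (algebraMap ℝ ℂ)).eval z := by
  rw [aeval_def, eval_map]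

private lemma hurwitz_ne {p : Polynomial ℝ} (h : HurwitzStable p) {z : ℂ} (hz : 0 ≤ z.re) :
    (p.map (algebraMap ℝ ℂ)).eval z ≠ 0 := by
  intro h0
  exact absurd (h z (by rw [aeval_eq_eval_map]; exact h0)) (not_lt.2 hz)

private lemma map_monic {a : Polynomial ℝ} (ha : a.Monic) : (a.map (algebraMap ℝ ℂ)).Monic :=
  ha.map _

private lemma map_degree_eq (p : Polynomial ℝ) :
    (p.map (algebraMap ℝ ℂ)).degree = p.degree :=
  degree_map_eq_of_injective (algebraMap ℝ ℂ).injective p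

private lemma map_lc (p : Polynomial ℝ) :
    (p.map (algebraMap ℝ ℂ)).leadingCoeff = (p.leadingCoeff : ℂ) :=
  leadingCoeff_map_of_injective (algebraMap ℝ ℂ).injective p

private lemma norm_ofReal_mul_I (R : ℝ) : ‖(R : ℂ) * I‖ = |R| := by
  simp

private lemma lc_pos {c a : Polynomial ℝ} (hamon : a.Monic) (hdeg : c.degree = a.degree)
    (hax : ∀ ω : ℝ, 0 < (evalI c ω / evalI a ω).re) : 0 < c.leadingCoeff := by
  set cc := c.map (algebraMap ℝ ℂ) with hcc
  set aa := a.map (algebraMap ℝ ℂ) with haa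
  have hdeg' : cc.degree = aa.degree := by rw [hcc, haa, map_degree_eq, map_degree_eq, hdeg]
  have hc0 : c ≠ 0 := by
    intro h; rw [h, degree_zero] at hdeg
    exact hamon.ne_zero (degree_eq_bot.mp hdeg.symm)
  have hlc0 : c.leadingCoeff ≠ 0 := leadingCoeff_ne_zero.mpr hc0
  by_contra hle
  push_neg at hle
  have hlt : c.leadingCoeff < 0 := lt_of_le_of_ne hle hlc0
  obtain ⟨R, hR1, hR⟩ := ratio_estimate cc aa (map_monic hamon) hdeg' (neg_pos.mpr hlt)
  have hnz : ‖(R:ℂ) * I‖ = R := by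
    rw [norm_ofReal_mul_I, abs_of_pos (lt_of_lt_of_le one_pos hR1)]
  obtain ⟨-, hclose⟩ := hR ((R:ℂ)*I) (le_of_eq hnz.symm)
  set w := cc.eval ((R:ℂ)*I) / aa.eval ((R:ℂ)*I) with hw
  have hwre : 0 < w.re := by
    have := hax R
    rw [evalI, evalI, aeval_eq_eval_map, aeval_eq_eval_map] at this
    exact this
  rw [map_lc] at hclose
  have h1 : |w.re - c.leadingCoeff| ≤ ‖w - (c.leadingCoeff : ℂ)‖ := by
    have := Complex.abs_re_le_norm (w - (c.leadingCoeff:ℂ))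
    simpa using this
  have : w.re - c.leadingCoeff < -c.leadingCoeff :=
    lt_of_le_of_lt (le_trans (le_abs_self _) h1) hclose
  linarith

private lemma re_pos_interior {c a : Polynomial ℝ} (hamon : a.Monic)
    (hdeg : c.degree = a.degree) (hahur : HurwitzStable a)
    (hax : ∀ ω : ℝ, 0 < (evalI c ω / evalI a ω).re)
    {z₀ : ℂ} (hz₀ : 0 < z₀.re) :
    0 < ((aeval z₀ c : ℂ) / aeval z₀ a).re := by
  set cc := c.map (algebraMap ℝ ℂ) with hcc
  set aa := a.map (algebraMap ℝ ℂ) with haa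
  have hdeg' : cc.degree = aa.degree := by rw [hcc, haa, map_degree_eq, map_degree_eq, hdeg]
  set lc := c.leadingCoeff with hlcdef
  have hlc : 0 < lc := lc_pos hamon hdeg hax
  set F : ℂ → ℂ := fun z => cc.eval z / aa.eval z with hF
  set g : ℂ → ℂ := fun z => Complex.exp (-F z) with hg
  obtain ⟨R₀, hR₀1, hbound⟩ := ratio_estimate cc aa (map_monic hamon) hdeg' (half_pos hlc)
  set R := max R₀ (‖z₀‖ + 1) with hR
  have hR1 : (1:ℝ) ≤ R := le_trans hR₀1 (le_max_left _ _)
  have hR0 : (0:ℝ) < R := lt_of_lt_of_le one_pos hR1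
  have hRz₀ : ‖z₀‖ < R := lt_of_lt_of_le (lt_add_one _) (le_max_right _ _)
  -- minimum over the axis segment
  set S : Set ℂ := {z : ℂ | z.re = 0 ∧ ‖z‖ ≤ R} with hS
  have hSclosed : IsClosed S :=
    ((isClosed_eq Complex.continuous_re continuous_const).inter
      (isClosed_le continuous_norm continuous_const))
  have hScompact : IsCompact S := Metric.isCompact_of_isClosed_isBounded hSclosed
    ((isBounded_closedBall (x := (0:ℂ)) (r := R)).subset
      (fun z hz => mem_closedBall_zero_iff.mpr hz.2))
  have hSne : S.Nonempty := ⟨0, by simp [hS, le_of_lt hR0]⟩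
  have haneS : ∀ z ∈ S, aa.eval z ≠ 0 := fun z hz => hurwitz_ne hahur (le_of_eq hz.1.symm)
  have hFcontS : ContinuousOn (fun z => (F z).re) S :=
    Complex.continuous_re.comp_continuousOn
      ((cc.continuous.continuousOn).div (aa.continuous.continuousOn) haneS)
  obtain ⟨w, hwS, hwmin⟩ := hScompact.exists_isMinOn hSne hFcontS
  have hwz : w = (w.im : ℂ) * I := by
    apply Complex.ext
    · rw [Complex.mul_I_re]; simp [hwS.1]
    · rw [Complex.mul_I_im]; simp
  have hm₁ : 0 < (F w).re := by
    have := hax w.im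
    rw [evalI, evalI, aeval_eq_eval_map, aeval_eq_eval_map, ← hwz] at this
    exact this
  set m : ℝ := min ((F w).re) (lc / 2) with hm
  have hmpos : 0 < m := lt_min hm₁ (half_pos hlc)
  -- the half-disc
  set U : Set ℂ := {z : ℂ | 0 < z.re ∧ ‖z‖ < R} with hU
  have hUopen : IsOpen U :=
    (isOpen_lt continuous_const Complex.continuous_re).inter
      (isOpen_lt continuous_norm continuous_const)
  have hUbdd : IsBounded U := (isBounded_closedBall (x := (0:ℂ)) (r := R)).subset
    (fun z hz => mem_closedBall_zero_iff.mpr (le_of_lt hz.2))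
  have hz₀U : z₀ ∈ U := ⟨hz₀, hRz₀⟩
  set K : Set ℂ := {z : ℂ | 0 ≤ z.re ∧ ‖z‖ ≤ R} with hK
  have hKclosed : IsClosed K :=
    ((isClosed_le continuous_const Complex.continuous_re).inter
      (isClosed_le continuous_norm continuous_const))
  have hclosK : closure U ⊆ K :=
    closure_minimal (fun z hz => ⟨le_of_lt hz.1, le_of_lt hz.2⟩) hKclosed
  -- differentiability
  set V : Set ℂ := {z : ℂ | aa.eval z ≠ 0} with hV
  have hgV : DifferentiableOn ℂ g V :=
    (((cc.differentiable.differentiableOn).div (aa.differentiable.differentiableOn)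
      (fun z hz => hz)).neg).cexp
  have hKV : K ⊆ V := fun z hz => hurwitz_ne hahur hz.1
  have hdc : DiffContOnCl ℂ g U :=
    ⟨hgV.mono (fun z hz => hKV (⟨le_of_lt hz.1, le_of_lt hz.2⟩)),
     hgV.continuousOn.mono (fun z hz => hKV (hclosK hz))⟩
  -- frontier bound
  have hfr : ∀ z ∈ frontier U, ‖g z‖ ≤ Real.exp (-m) := by
    intro z hzf
    have hzcl : z ∈ closure U := frontier_subset_closure hzf
    have hzK : z ∈ K := hclosK hzcl
    have hznotU : z ∉ U := by
      rw [hUopen.frontier_eq] at hzf; exact hzf.2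
    have hre : m ≤ (F z).re := by
      rcases lt_or_eq_of_le hzK.1 with hpos | hzero
      · -- interior of half-plane, so on the arc : ‖z‖ ≥ R
        have hzR : R ≤ ‖z‖ := by
          by_contra hlt
          exact hznotU ⟨hpos, lt_of_not_ge hlt⟩
        obtain ⟨-, hcl⟩ := hbound z (le_trans (le_max_left _ _) hzR)
        rw [map_lc] at hcl
        have h1 : |(F z).re - lc| ≤ ‖F z - (lc:ℂ)‖ := by
          have := Complex.abs_re_le_norm (F z - (lc:ℂ))
          simpa using this
        have h2 : lc - (F z).re ≤ |(F z).re - lc| := by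
          rw [abs_sub_comm]; exact le_abs_self _
        have : lc - (F z).re < lc / 2 := lt_of_le_of_lt (le_trans h2 h1) hcl
        have : lc / 2 ≤ (F z).re := by linarith
        exact le_trans (min_le_right _ _) this
      · -- on the imaginary axis
        have hzS : z ∈ S := ⟨hzero.symm, hzK.2⟩
        exact le_trans (min_le_left _ _) (hwmin hzS)
    have hnorm : ‖g z‖ = Real.exp (-(F z).re) := by
      rw [hg, Complex.norm_exp, Complex.neg_re]
    rw [hnorm]
    exact Real.exp_le_exp.mpr (by linarith)
  have hfinal := Complex.norm_le_of_forall_mem_frontier_norm_le hUbdd hdc hfr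
    (subset_closure hz₀U)
  have hnorm₀ : ‖g z₀‖ = Real.exp (-(F z₀).re) := by
    rw [hg, Complex.norm_exp, Complex.neg_re]
  rw [hnorm₀, Real.exp_le_exp] at hfinal
  have : 0 < (F z₀).re := lt_of_lt_of_le hmpos (by linarith)
  rw [aeval_eq_eval_map, aeval_eq_eval_map]
  exact this

theorem segment_stability_necessary (n : ℕ) (a b c : Polynomial ℝ)
    (hamon : a.Monic) (hadeg : a.natDegree = n)
    (hbmon : b.Monic) (hbdeg : b.natDegree = n)
    (hca : SPR c a) (hcb : SPR c b) :
    ∀ lam : ℝ, lam ∈ Set.Icc (0 : ℝ) 1 →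
      HurwitzStable (Polynomial.C lam * b + Polynomial.C (1 - lam) * a) := by
  intro lam hlam z hz
  by_contra hre
  push_neg at hre
  obtain ⟨hdca, hahur, haxa⟩ := hca
  obtain ⟨hdcb, hbhur, haxb⟩ := hcb
  set A := (aeval z a : ℂ) with hA
  set B := (aeval z b : ℂ) with hB
  have hzeq : (lam : ℂ) * B + (1 - (lam : ℂ)) * A = 0 := by
    have h := hz
    simp only [map_add, map_mul, aeval_C] at h
    push_cast at h
    convert h using 2 <;> simp [hA, hB]
  have hAne : A ≠ 0 := by
    rw [hA, aeval_eq_eval_map]; exact hurwitz_ne hahur hre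
  have hBne : B ≠ 0 := by
    rw [hB, aeval_eq_eval_map]; exact hurwitz_ne hbhur hre
  rcases eq_or_lt_of_le hlam.1 with h0 | h0pos
  · apply hAne
    rw [← h0] at hzeq
    simpa using hzeq
  rcases eq_or_lt_of_le hlam.2 with h1 | h1lt
  · apply hBne
    rw [h1] at hzeq
    simpa using hzeq
  set t : ℝ := (1 - lam) / lam with ht
  have htpos : 0 < t := div_pos (by linarith) h0pos
  have hlamne : (lam : ℂ) ≠ 0 := Complex.ofReal_ne_zero.mpr (ne_of_gt h0pos)
  have hBA : B = -((t : ℝ) : ℂ) * A := by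
    rw [ht]
    push_cast
    field_simp
    linear_combination hzeq
  have hkey : ((aeval z c : ℂ) / B).re = -t⁻¹ * ((aeval z c : ℂ) / A).re := by
    rw [hBA]
    have htne : ((t:ℝ):ℂ) ≠ 0 := Complex.ofReal_ne_zero.mpr (ne_of_gt htpos)
    have h2 : (aeval z c : ℂ) / (-((t:ℝ):ℂ) * A) = ((-t⁻¹ : ℝ) : ℂ) * ((aeval z c : ℂ) / A) := by
      push_cast
      field_simp
    rw [h2]
    simp [Complex.mul_re, Complex.ofReal_re, Complex.ofReal_im]
  have h1 : 0 < ((aeval z c : ℂ) / A).re ∧ 0 < ((aeval z c : ℂ) / B).re := by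
    rcases eq_or_lt_of_le hre with hz0 | hz0
    · have hzim : z = (z.im : ℂ) * I := by
        apply Complex.ext
        · rw [Complex.mul_I_re]; simp [← hz0]
        · rw [Complex.mul_I_im]; simp
      constructor
      · have h := haxa z.im
        simp only [evalI, ← hzim] at h
        exact h
      · have h := haxb z.im
        simp only [evalI, ← hzim] at h
        exact h
    · exact ⟨re_pos_interior hamon hdca hahur haxa hz0,
        re_pos_interior hbmon hdcb hbhur haxb hz0⟩
  have hc2 := h1.2
  rw [hkey] at hc2
  nlinarith [h1.1, inv_pos.mpr htpos]
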